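/- The multiplicativity step of the previous construction: if ψ_t satisfies t(d/dt)ψ_t = ψ_t ⋆ α_t with α_t an infinitesimal character, and ψ_t is multiplicative on all products of total degree less than n, then for indecomposable a, b with deg(a) + deg(b) = n, t(d/dt)[ψ_t(ab) − ψ_t(a)ψ_t(b)] = 0 and hence (with matching initial conditions) ψ_t(ab) = ψ_t(a)ψ_t(b). -/

import Mathlib

open TensorProduct

variable {H : Type*} [CommRing H] [HopfAlgebra ℂ H]

/-- Convolution product of linear maps `H → A`: `f ⋆ g = m_A ∘ (f ⊗ g) ∘ Δ`. -/
noncomputable def conv {A : Type*} [CommRing A] [Algebra ℂ A]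
    (f g : H →ₗ[ℂ] A) : H →ₗ[ℂ] A :=
  (LinearMap.mul' ℂ A) ∘ₗ (TensorProduct.map f g) ∘ₗ (Coalgebra.comul (R := ℂ) (A := H))

/-- An infinitesimal character: `α(ab) = α(a)ε(b) + ε(a)α(b)`. -/
def IsInfChar {A : Type*} [CommRing A] [Algebra ℂ A] (α : H →ₗ[ℂ] A) : Prop :=
  ∀ a b : H, α (a * b)
    = Coalgebra.counit (R := ℂ) b • α a + Coalgebra.counit (R := ℂ) a • α b

/-- An element is indecomposable if it is not a product of two elements of the
augmentation ideal. -/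
def Indecomposable (x : H) : Prop :=
  ∀ u v : H, Coalgebra.counit (R := ℂ) u = 0 → Coalgebra.counit (R := ℂ) v = 0 →
    x ≠ u * v

/-- multiplicativity step: if `ψ_t` satisfies the ODE
`t(d/dt)ψ_t = ψ_t ⋆ α_t` with `α_t` a family of infinitesimal characters and
`ψ_t(1) = 1`, and `ψ_t` is multiplicative on all products of total degree less
than `n`, then for indecomposable homogeneous `a, b` with
`deg(a) + deg(b) = n`, the function `t ↦ ψ_t(ab) − ψ_t(a)ψ_t(b)` has
derivative `0` (i.e. `t(d/dt)[ψ_t(ab) − ψ_t(a)ψ_t(b)] = 0`) on `t > 0`; hence,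
with matching initial conditions at some `t₀ > 0`, `ψ_t(ab) = ψ_t(a)ψ_t(b)`
for all `t > 0`. -/
theorem flow_multiplicativity_step
    {A : Type*} [NormedCommRing A] [NormedAlgebra ℂ A]
    (𝒜 : ℕ → Submodule ℂ H) [GradedAlgebra 𝒜] (hconn : 𝒜 0 = 1)
    -- compatibility of the coproduct with the grading:
    (hΔ : ∀ m : ℕ, ∀ x ∈ 𝒜 m, Coalgebra.comul (R := ℂ) x ∈
      ⨆ p : {p : ℕ × ℕ // p.1 + p.2 = m},
        LinearMap.range (TensorProduct.map ((𝒜 (p : ℕ × ℕ).1).subtype)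
          ((𝒜 (p : ℕ × ℕ).2).subtype)))
    (α : ℝ → (H →ₗ[ℂ] A)) (hαchar : ∀ t : ℝ, IsInfChar (α t))
    (ψ : ℝ → (H →ₗ[ℂ] A))
    (hψ1 : ∀ t : ℝ, ψ t 1 = 1)
    -- the ODE t(d/dt)ψ_t = ψ_t ⋆ α_t on t > 0:
    (hODE : ∀ x : H, ∀ t ∈ Set.Ioi (0 : ℝ),
      HasDerivAt (fun s : ℝ => ψ s x) (((t : ℂ))⁻¹ • ((conv (ψ t) (α t)) x)) t)
    (n : ℕ)
    -- ψ_t is multiplicative on all products of total degree < n: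
    (hmult : ∀ t : ℝ, ∀ i j : ℕ, i + j < n → ∀ x ∈ 𝒜 i, ∀ y ∈ 𝒜 j,
      ψ t (x * y) = ψ t x * ψ t y)
    (p q : ℕ) (hp : 0 < p) (hq : 0 < q) (hpq : p + q = n)
    (a b : H) (ha : a ∈ 𝒜 p) (hb : b ∈ 𝒜 q)
    (hai : Indecomposable a) (hbi : Indecomposable b) :
    (∀ t ∈ Set.Ioi (0 : ℝ),
      HasDerivAt (fun s : ℝ => ψ s (a * b) - ψ s a * ψ s b) 0 t) ∧
    (∀ t₀ ∈ Set.Ioi (0 : ℝ), ψ t₀ (a * b) = ψ t₀ a * ψ t₀ b →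
      ∀ t ∈ Set.Ioi (0 : ℝ), ψ t (a * b) = ψ t a * ψ t b) := by
  classical
  -- infinitesimal characters kill the unit
  have hα1 : ∀ t : ℝ, α t 1 = 0 := by
    intro t
    have h := hαchar t 1 1
    rw [one_mul, Bialgebra.counit_one, one_smul] at h
    exact (left_eq_add.mp h)
  -- the key algebraic identity
  have key : ∀ t : ℝ, conv (ψ t) (α t) (a * b)
      = ψ t b * conv (ψ t) (α t) a + ψ t a * conv (ψ t) (α t) b := by
    intro t
    set μ : H ⊗[ℂ] H →ₗ[ℂ] A :=
      (LinearMap.mul' ℂ A) ∘ₗ (TensorProduct.map (ψ t) (α t)) with hμ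
    set L : H ⊗[ℂ] H →ₗ[ℂ] H ⊗[ℂ] H →ₗ[ℂ] A :=
      (LinearMap.mul ℂ (H ⊗[ℂ] H)).compr₂ μ with hL
    have hLapp : ∀ τ σ : H ⊗[ℂ] H, L τ σ = μ (τ * σ) := fun _ _ => rfl
    set cR : H ⊗[ℂ] H →ₗ[ℂ] H :=
      (TensorProduct.rid ℂ H).toLinearMap ∘ₗ
        (LinearMap.lTensor H (Coalgebra.counit (R := ℂ))) with hcR
    set j : H →ₗ[ℂ] H ⊗[ℂ] H := (TensorProduct.mk ℂ H H).flip 1 with hj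
    have hcRΔ : ∀ x : H, cR (Coalgebra.comul (R := ℂ) x) = x := by
      intro x
      simp [hcR]
    have hjapp : ∀ x : H, j x = x ⊗ₜ[ℂ] 1 := fun x => rfl
    -- the infinitesimal-character identity at the level of tensors
    have hstep1 : L = L.compl₂ (j ∘ₗ cR) + L ∘ₗ (j ∘ₗ cR) := by
      ext x₁ x₂ y₁ y₂
      simp only [hL, hj, hcR, LinearMap.compr₂_apply, LinearMap.mul_apply',
        LinearMap.add_apply, LinearMap.compl₂_apply, LinearMap.comp_apply,
        TensorProduct.AlgebraTensorModule.curry_apply, TensorProduct.curry_apply,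
        LinearMap.coe_restrictScalars, LinearMap.lTensor_tmul,
        LinearEquiv.coe_coe, TensorProduct.rid_tmul, LinearMap.flip_apply,
        TensorProduct.mk_apply, Algebra.TensorProduct.tmul_mul_tmul,
        TensorProduct.map_tmul, LinearMap.mul'_apply, hμ,
        map_smul, smul_mul_assoc, mul_smul_comm, mul_one, one_mul,
        TensorProduct.smul_tmul']
      rw [hαchar t x₂ y₂]
      simp [mul_add, mul_smul_comm]
    -- the graded multiplicativity lemma
    have haux : ∀ (m k : ℕ), m + k = n → ∀ c : H, c ∈ 𝒜 k →
        ∀ w ∈ (⨆ p : {p : ℕ × ℕ // p.1 + p.2 = m},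
          LinearMap.range (TensorProduct.map ((𝒜 (p : ℕ × ℕ).1).subtype)
            ((𝒜 (p : ℕ × ℕ).2).subtype))),
        L w (c ⊗ₜ[ℂ] 1) = ψ t c * μ w := by
      intro m k hmk c hc w hw
      refine Submodule.iSup_induction'
        (motive := fun w _ => L w (c ⊗ₜ[ℂ] 1) = ψ t c * μ w) _ ?_ ?_ ?_ hw
      · rintro ⟨⟨i, j'⟩, hij⟩ x ⟨u, rfl⟩
        simp only at hij
        induction u using TensorProduct.induction_on with
        | zero => simp
        | tmul x y =>
          obtain ⟨x, hx⟩ := x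
          obtain ⟨y, hy⟩ := y
          have hmap : (TensorProduct.map ((𝒜 i).subtype) ((𝒜 j').subtype))
              ((⟨x, hx⟩ : 𝒜 i) ⊗ₜ[ℂ] (⟨y, hy⟩ : 𝒜 j')) = x ⊗ₜ[ℂ] y := rfl
          rw [hmap, hLapp]
          rcases Nat.eq_zero_or_pos j' with hj0 | hjpos
          · subst hj0
            obtain ⟨r, hr⟩ := (Submodule.mem_one).mp (hconn ▸ hy)
            have hy0 : α t y = 0 := by
              rw [← hr, Algebra.algebraMap_eq_smul_one, map_smul, hα1, smul_zero]
            simp [Algebra.TensorProduct.tmul_mul_tmul, hμ, LinearMap.mul'_apply, hy0]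
          · have hik : i + k < n := by omega
            have hm := hmult t i k hik x hx c hc
            simp only [Algebra.TensorProduct.tmul_mul_tmul, mul_one, hμ,
              LinearMap.comp_apply, TensorProduct.map_tmul, LinearMap.mul'_apply, hm]
            ring
        | add u v hu hv =>
          simp only [map_add, LinearMap.add_apply, mul_add] at hu hv ⊢
          rw [hu, hv]
      · simp
      · intro x y hx hy ihx ihy
        simp only [map_add, LinearMap.add_apply, mul_add, ihx, ihy]
    -- assemble
    have hconv : ∀ x : H, conv (ψ t) (α t) x = μ (Coalgebra.comul (R := ℂ) x) :=
      fun _ => rfl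
    have e1 : conv (ψ t) (α t) (a * b)
        = L (Coalgebra.comul (R := ℂ) a) (Coalgebra.comul (R := ℂ) b) := by
      rw [hconv, Bialgebra.comul_mul, ← hLapp]
    rw [e1, hstep1]
    simp only [LinearMap.add_apply, LinearMap.compl₂_apply, LinearMap.comp_apply,
      hcRΔ, hjapp]
    have t1 : L (Coalgebra.comul (R := ℂ) a) (b ⊗ₜ[ℂ] 1)
        = ψ t b * μ (Coalgebra.comul (R := ℂ) a) :=
      haux p q hpq b hb _ (hΔ p a ha)
    have t2 : L (a ⊗ₜ[ℂ] 1) (Coalgebra.comul (R := ℂ) b)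
        = ψ t a * μ (Coalgebra.comul (R := ℂ) b) := by
      rw [hLapp, mul_comm, ← hLapp]
      exact haux q p (by omega) a ha _ (hΔ q b hb)
    rw [t1, t2, hconv, hconv]
  -- Part 1: zero derivative
  have part1 : ∀ t ∈ Set.Ioi (0 : ℝ),
      HasDerivAt (fun s : ℝ => ψ s (a * b) - ψ s a * ψ s b) 0 t := by
    intro t ht
    have h1 := hODE (a * b) t ht
    have h2 := (hODE a t ht).mul (hODE b t ht)
    have h3 := h1.sub h2
    convert h3 using 1
    case e'_4 => rfl
    case e'_8 => rfl
    rw [key t, smul_add]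
    simp only [smul_mul_assoc, mul_smul_comm]
    rw [mul_comm (conv (ψ t) (α t) a) (ψ t b)]
    abel
  refine ⟨part1, ?_⟩
  -- Part 2: constancy
  intro t₀ ht₀ h0 t ht
  have hconst : ψ t (a * b) - ψ t a * ψ t b = ψ t₀ (a * b) - ψ t₀ a * ψ t₀ b := by
    refine (convex_Ioi (0 : ℝ)).is_const_of_fderivWithin_eq_zero (𝕜 := ℝ)
      (f := fun s : ℝ => ψ s (a * b) - ψ s a * ψ s b) ?_ ?_ ht ht₀
    · intro s hs
      exact ((part1 s hs).differentiableAt).differentiableWithinAt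
    · intro s hs
      have hz : ContinuousLinearMap.toSpanSingleton ℝ (0 : A) = 0 := by
        ext; simp
      have hfd : HasFDerivAt (fun s : ℝ => ψ s (a * b) - ψ s a * ψ s b)
          (0 : ℝ →L[ℝ] A) s := by
        have := (part1 s hs).hasFDerivAt
        rwa [hz] at this
      exact hfd.hasFDerivWithinAt.fderivWithin (isOpen_Ioi.uniqueDiffWithinAt hs)
  rw [h0, sub_self] at hconst
  exact sub_eq_zero.mp hconst
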